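/- arXiv:1009.3743 — 3 statements merged into one kernel-verified Lean document; each statement's English description precedes it below -/
import Mathlib

section
/- For a fixed blocks' basis J = {I_1, ..., I_n}, the family of probability laws on ℝ^{|I|} of random vectors that are associated between the blocks I_1, ..., I_n is closed with respect to weak convergence of probability measures. -/
open MeasureTheory ProbabilityTheory
open BoundedContinuousFunction

/-- Covariance of two real functionals under `μ`. -/
noncomputable def cov {Ω : Type*} [MeasurableSpace Ω] (μ : Measure Ω) (f g : Ω → ℝ) : ℝ :=
  (∫ ω, f ω * g ω ∂μ) - (∫ ω, f ω ∂μ) * (∫ ω, g ω ∂μ)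

/-- A family of real random variables is associated (Esary–Proschan–Walkup). -/
def IsAssociated {Ω : Type*} [MeasurableSpace Ω] (μ : Measure Ω) {I : Type*}
    (X : I → Ω → ℝ) : Prop :=
  ∀ f g : (I → ℝ) → ℝ, Monotone f → Monotone g →
    Integrable (fun ω => f (fun i => X i ω)) μ →
    Integrable (fun ω => g (fun i => X i ω)) μ →
    Integrable (fun ω => f (fun i => X i ω) * g (fun i => X i ω)) μ →
    0 ≤ cov μ (fun ω => f (fun i => X i ω)) (fun ω => g (fun i => X i ω))

/-- Association between the blocks given by the fibers of `B`. -/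
def IsBlockAssociated {Ω : Type*} [MeasurableSpace Ω] (μ : Measure Ω) {I : Type*} {n : ℕ}
    (B : I → Fin n) (X : I → Ω → ℝ) : Prop :=
  ∀ f : (k : Fin n) → ({i : I // B i = k} → ℝ) → ℝ, (∀ k, Monotone (f k)) →
    IsAssociated μ (fun k ω => f k (fun i => X i.1 ω))

/-- A law `μ` on `ℝ^I` is associated between the blocks given by `B`, tested on
bounded continuous coordinatewise non-decreasing functions. -/
def BlockAssociatedLaw {I : Type*} [Fintype I] {n : ℕ} (B : I → Fin n)
    (μ : Measure (I → ℝ)) : Prop :=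
  ∀ f : (k : Fin n) → ({i : I // B i = k} → ℝ) → ℝ,
    (∀ k, Monotone (f k)) → (∀ k, Continuous (f k)) → (∀ k, ∃ C, ∀ x, |f k x| ≤ C) →
  ∀ g h : (Fin n → ℝ) → ℝ, Monotone g → Monotone h → Continuous g → Continuous h →
    (∃ C, ∀ v, |g v| ≤ C) → (∃ C, ∀ v, |h v| ≤ C) →
    0 ≤ cov μ (fun x => g (fun k => f k (fun i => x i.1)))
              (fun x => h (fun k => f k (fun i => x i.1)))

/-- the family of laws which are associated between the blocks of a fixed
blocks' basis is closed under weak convergence of probability measures. -/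
theorem blockAssociatedLaws_isClosed {I : Type*} [Fintype I] {n : ℕ} (B : I → Fin n) :
    IsClosed {μ : ProbabilityMeasure (I → ℝ) | BlockAssociatedLaw B (μ : Measure (I → ℝ))} := by
  have key : ∀ (F G : (I → ℝ) →ᵇ ℝ),
      Continuous (fun μ : ProbabilityMeasure (I → ℝ) =>
        cov (μ : Measure (I → ℝ)) (fun x => F x) (fun x => G x)) := by
    intro F G
    have h1 := ProbabilityMeasure.continuous_integral_boundedContinuousFunction (X := I → ℝ) (F * G)
    have h2 := ProbabilityMeasure.continuous_integral_boundedContinuousFunction (X := I → ℝ) F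
    have h3 := ProbabilityMeasure.continuous_integral_boundedContinuousFunction (X := I → ℝ) G
    simp only [BoundedContinuousFunction.coe_mul, Pi.mul_apply] at h1
    exact h1.sub (h2.mul h3)
  have hset : {μ : ProbabilityMeasure (I → ℝ) | BlockAssociatedLaw B (μ : Measure (I → ℝ))} =
      ⋂ (f : (k : Fin n) → ({i : I // B i = k} → ℝ) → ℝ)
        (_ : ∀ k, Monotone (f k)) (_ : ∀ k, Continuous (f k)) (_ : ∀ k, ∃ C, ∀ x, |f k x| ≤ C)
        (g : (Fin n → ℝ) → ℝ) (h : (Fin n → ℝ) → ℝ)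
        (_ : Monotone g) (_ : Monotone h) (_ : Continuous g) (_ : Continuous h)
        (_ : ∃ C, ∀ v, |g v| ≤ C) (_ : ∃ C, ∀ v, |h v| ≤ C),
        {μ : ProbabilityMeasure (I → ℝ) |
          0 ≤ cov (μ : Measure (I → ℝ)) (fun x => g (fun k => f k (fun i => x i.1)))
              (fun x => h (fun k => f k (fun i => x i.1)))} := by
    ext μ
    simp only [Set.mem_setOf_eq, Set.mem_iInter, BlockAssociatedLaw]
  rw [hset]
  refine isClosed_iInter fun f => isClosed_iInter fun hfm => isClosed_iInter fun hfc =>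
    isClosed_iInter fun hfb => isClosed_iInter fun g => isClosed_iInter fun h =>
    isClosed_iInter fun hgm => isClosed_iInter fun hhm => isClosed_iInter fun hgc =>
    isClosed_iInter fun hhc => isClosed_iInter fun hgb => isClosed_iInter fun hhb => ?_
  obtain ⟨Cg, hCg⟩ := hgb
  obtain ⟨Ch, hCh⟩ := hhb
  have hFc : Continuous fun x : I → ℝ => g (fun k => f k (fun i => x i.1)) :=
    hgc.comp (continuous_pi fun k => (hfc k).comp (by fun_prop))
  have hGc : Continuous fun x : I → ℝ => h (fun k => f k (fun i => x i.1)) :=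
    hhc.comp (continuous_pi fun k => (hfc k).comp (by fun_prop))
  set F : (I → ℝ) →ᵇ ℝ := BoundedContinuousFunction.ofNormedAddCommGroup
    (fun x => g (fun k => f k (fun i => x i.1))) hFc Cg
    (fun x => by simpa [Real.norm_eq_abs] using hCg _)
  set G : (I → ℝ) →ᵇ ℝ := BoundedContinuousFunction.ofNormedAddCommGroup
    (fun x => h (fun k => f k (fun i => x i.1))) hGc Ch
    (fun x => by simpa [Real.norm_eq_abs] using hCh _)
  have : {μ : ProbabilityMeasure (I → ℝ) |
      0 ≤ cov (μ : Measure (I → ℝ)) (fun x => g (fun k => f k (fun i => x i.1)))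
          (fun x => h (fun k => f k (fun i => x i.1)))} =
      {μ : ProbabilityMeasure (I → ℝ) |
        0 ≤ cov (μ : Measure (I → ℝ)) (fun x => F x) (fun x => G x)} := rfl
  rw [this]
  exact isClosed_le continuous_const (key F G)
end

section
/- Let ν be a measure on ℝ^{|I|} and for k ≠ l define ν_{kl}(A) = ν(π_{kl}^{-1}(A) ∩ (ℝ² \ {0})) where π_{kl}(x) = (x_k, x_l). Then the following are equivalent: (i) for all k, l not in the same block, ν_{kl} is concentrated on (ℝ₋)² ∪ (ℝ₊)²; (ii) ν is concentrated on the set S = (ℝ₊)^{|I|} ∪ (ℝ₋)^{|I|} ∪ U, where U is the union over m = 1,...,n of the sets {x : x_i = 0 for all i ∉ I_m}. -/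
open MeasureTheory

/-- for a measure `ν` on `ℝ^I` and blocks given by `B`, the two-dimensional
characteristics `ν_{kl}` for `k, l` in different blocks are concentrated on
`(ℝ₋)² ∪ (ℝ₊)²` if and only if `ν` is concentrated on
`S = (ℝ₊)^I ∪ (ℝ₋)^I ∪ ⋃ m {x | xᵢ = 0 for i outside block m}`. -/
theorem levyMeasure_pairwise_concentration_iff
    {I : Type*} [Fintype I] {n : ℕ} (B : I → Fin n) (ν : Measure (I → ℝ)) :
    (∀ k l : I, B k ≠ B l →
        ν {x : I → ℝ | ¬(x k ≤ 0 ∧ x l ≤ 0) ∧ ¬(0 ≤ x k ∧ 0 ≤ x l)} = 0) ↔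
      ν ({x : I → ℝ | ∀ i, 0 ≤ x i} ∪ {x : I → ℝ | ∀ i, x i ≤ 0} ∪
          ⋃ m : Fin n, {x : I → ℝ | ∀ i, B i ≠ m → x i = 0})ᶜ = 0 := by
  constructor
  · intro h
    refine measure_mono_null (t := ⋃ k : I, ⋃ l : I,
      {x : I → ℝ | B k ≠ B l ∧ ¬(x k ≤ 0 ∧ x l ≤ 0) ∧ ¬(0 ≤ x k ∧ 0 ≤ x l)}) ?_ ?_
    · intro x hx
      simp only [Set.mem_compl_iff, Set.mem_union, Set.mem_iUnion, Set.mem_setOf_eq,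
        not_or, not_exists, not_forall] at hx
      obtain ⟨⟨⟨i, hi⟩, ⟨j, hj⟩⟩, hU⟩ := hx
      rw [not_le] at hi
      rw [not_le] at hj
      -- hi : x i < 0, hj : 0 < x j
      simp only [Set.mem_iUnion, Set.mem_setOf_eq]
      by_cases hij : B i = B j
      · obtain ⟨p, hp⟩ := hU (B i)
        push_neg at hp
        obtain ⟨hpB, hpx⟩ := hp
        rcases lt_or_gt_of_ne hpx with hp1 | hp1
        · exact ⟨j, p, fun hc => hpB (hc.symm.trans hij.symm),
            fun hc => absurd hc.1 (not_le.2 hj), fun hc => absurd hc.2 (not_le.2 hp1)⟩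
        · exact ⟨p, i, fun hc => hpB hc,
            fun hc => absurd hc.1 (not_le.2 hp1), fun hc => absurd hc.2 (not_le.2 hi)⟩
      · exact ⟨j, i, fun hc => hij hc.symm,
          fun hc => absurd hc.1 (not_le.2 hj), fun hc => absurd hc.2 (not_le.2 hi)⟩
    · refine measure_iUnion_null fun k => measure_iUnion_null fun l => ?_
      by_cases hkl : B k ≠ B l
      · exact measure_mono_null (fun x hx => hx.2) (h k l hkl)
      · have he : {x : I → ℝ | B k ≠ B l ∧ ¬(x k ≤ 0 ∧ x l ≤ 0) ∧ ¬(0 ≤ x k ∧ 0 ≤ x l)}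
            = ∅ := by
          ext x
          simp only [Set.mem_setOf_eq, Set.mem_empty_iff_false, iff_false]
          exact fun hc => hkl hc.1
        rw [he]
        simp
  · intro h k l hkl
    apply measure_mono_null _ h
    intro x hx
    obtain ⟨h1, h2⟩ := hx
    simp only [Set.mem_compl_iff, Set.mem_union, Set.mem_iUnion, Set.mem_setOf_eq, not_or,
      not_exists]
    refine ⟨⟨fun hc => h2 ⟨hc k, hc l⟩, fun hc => h1 ⟨hc k, hc l⟩⟩, fun m hm => ?_⟩
    by_cases hkm : B k = m
    · have hl : x l = 0 := hm l (fun hc => hkl (hkm.trans hc.symm))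
      have hk1 : 0 < x k := lt_of_not_ge (fun hc => h1 ⟨hc, hl.le⟩)
      exact h2 ⟨hk1.le, hl.ge⟩
    · have hk : x k = 0 := hm k hkm
      exact h1 ⟨hk.le, le_of_not_gt fun hc => h2 ⟨hk.ge, hc.le⟩⟩
end

section
/- The identity ℝ^{|I|} = (ℝ₊)^{|I|} ∪ (ℝ₋)^{|I|} ∪ U ∪ D holds, where U = ∪_{m=1}^n {x : x_i = 0 for all i ∉ I_m} and D = ∪_{(k,l): k,l in different blocks} {x : x_k > 0, x_l < 0}. -/
/-- `ℝ^I = (ℝ₊)^I ∪ (ℝ₋)^I ∪ U ∪ D`, where `U` is the union of the sets of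
vectors vanishing outside a single block and `D` is the union, over pairs of indices in
different blocks, of the sets of vectors with a strictly positive coordinate at one index
and a strictly negative coordinate at the other. -/
theorem univ_eq_pos_union_neg_union_U_union_D
    {I : Type*} {n : ℕ} (B : I → Fin n) :
    (Set.univ : Set (I → ℝ)) =
      {x : I → ℝ | ∀ i, 0 ≤ x i} ∪ {x : I → ℝ | ∀ i, x i ≤ 0} ∪
        (⋃ m : Fin n, {x : I → ℝ | ∀ i, B i ≠ m → x i = 0}) ∪
        (⋃ k : I, ⋃ l : I, ⋃ _ : B k ≠ B l, {x : I → ℝ | 0 < x k ∧ x l < 0}) := by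
  ext x
  simp only [Set.mem_univ, true_iff, Set.mem_union, Set.mem_iUnion, Set.mem_setOf_eq]
  by_cases hpos : ∀ i, 0 ≤ x i
  · exact Or.inl (Or.inl (Or.inl hpos))
  by_cases hneg : ∀ i, x i ≤ 0
  · exact Or.inl (Or.inl (Or.inr hneg))
  push_neg at hpos hneg
  obtain ⟨l, hl⟩ := hpos
  obtain ⟨k, hk⟩ := hneg
  by_cases hkl : B k ≠ B l
  · exact Or.inr ⟨k, l, hkl, hk, hl⟩
  push_neg at hkl
  by_cases hU : ∀ i, B i ≠ B k → x i = 0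
  · exact Or.inl (Or.inr ⟨B k, hU⟩)
  push_neg at hU
  obtain ⟨i, hiB, hix⟩ := hU
  rcases lt_or_gt_of_ne hix with h | h
  · exact Or.inr ⟨k, i, fun e => hiB e.symm, hk, h⟩
  · exact Or.inr ⟨i, l, fun e => hiB (e.trans hkl.symm), h, hl⟩
end
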